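/- Let S ⊆ A∖{0} be a multiplicatively closed subset and define Ŝ = {f ∈ B : s ∈ fB for some s ∈ S}. Then S⁻¹B = ℂ ⊗_ℝ S⁻¹A, the natural group homomorphism π : Π(A) → Π(S⁻¹A) sending the class [f]_A of a nonzero f ∈ B to its class [f]_{S⁻¹A} is surjective, and its kernel is the subgroup ⟨Ŝ⟩_A of Π(A) generated by the classes [s]_A for s ∈ Ŝ; hence Π(S⁻¹A) ≅ Π(A)/⟨Ŝ⟩_A. -/

import Mathlib

/-- The subgroup `B* · K*` of `L* = Frac(B)*`, where `K = Frac(A)` for the real form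
`A ⊆ B` (the subgroup generated by units of `B` and images of nonzero elements
of `A`). -/
noncomputable def polarN (B : Type) [CommRing B] [IsDomain B] (A : Subring B) :
    Subgroup (FractionRing B)ˣ :=
  Subgroup.closure {u : (FractionRing B)ˣ |
    (∃ b : Bˣ, (u : FractionRing B) = algebraMap B (FractionRing B) (b : B)) ∨
    (∃ a : A, (u : FractionRing B) = algebraMap B (FractionRing B) (a : B))}

/-- The class `[f]_A ∈ Π(A) = L*/(B*·K*)` of a nonzero `f ∈ B`. -/
noncomputable def polarCls (B : Type) [CommRing B] [IsDomain B] (A : Subring B)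
    (f : B) (hf : f ≠ 0) : (FractionRing B)ˣ ⧸ polarN B A :=
  QuotientGroup.mk (Units.mk0 (algebraMap B (FractionRing B) f)
    (by rwa [Ne, IsFractionRing.to_map_eq_zero_iff]))

/-- The localization `S⁻¹B`, realized as the subring of `L = Frac(B)` generated by `B`
and the inverses of elements of `S`. -/
noncomputable def locB (B : Type) [CommRing B] [IsDomain B] (S : Submonoid B) :
    Subring (FractionRing B) :=
  Subring.closure (Set.range (algebraMap B (FractionRing B)) ∪
    {x | ∃ s ∈ S, x * algebraMap B (FractionRing B) s = 1})

/-- The localization `S⁻¹A`, realized as the subring of `L = Frac(B)` generated by `A`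
and the inverses of elements of `S`. -/
noncomputable def locA (B : Type) [CommRing B] [IsDomain B] (A : Subring B)
    (S : Submonoid B) : Subring (FractionRing B) :=
  Subring.closure ((algebraMap B (FractionRing B)) '' A ∪
    {x | ∃ s ∈ S, x * algebraMap B (FractionRing B) s = 1})

/-- The subgroup `(S⁻¹B)* · Frac(S⁻¹A)*` of `L*` (note `Frac(S⁻¹A) = Frac(A) = K`). -/
noncomputable def polarNLoc (B : Type) [CommRing B] [IsDomain B] (A : Subring B)
    (S : Submonoid B) : Subgroup (FractionRing B)ˣ :=
  Subgroup.closure {u : (FractionRing B)ˣ |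
    ((u : FractionRing B) ∈ locB B S ∧
      (((u⁻¹ : (FractionRing B)ˣ) : FractionRing B) ∈ locB B S)) ∨
    (u : FractionRing B) ∈ locA B A S}

/-- The class `[f]_{S⁻¹A} ∈ Π(S⁻¹A)` of a nonzero `f ∈ B`. -/
noncomputable def polarClsLoc (B : Type) [CommRing B] [IsDomain B] (A : Subring B)
    (S : Submonoid B) (f : B) (hf : f ≠ 0) :
    (FractionRing B)ˣ ⧸ polarNLoc B A S :=
  QuotientGroup.mk (Units.mk0 (algebraMap B (FractionRing B) f)
    (by rwa [Ne, IsFractionRing.to_map_eq_zero_iff]))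

private lemma phi_ne_zero {B : Type} [CommRing B] [IsDomain B] {f : B} (hf : f ≠ 0) :
    algebraMap B (FractionRing B) f ≠ 0 := by
  rwa [Ne, IsFractionRing.to_map_eq_zero_iff]

lemma mem_locB_iff {B : Type} [CommRing B] [IsDomain B] (S : Submonoid B)
    (hS0 : (0 : B) ∉ S) (x : FractionRing B) :
    x ∈ locB B S ↔ ∃ f : B, ∃ s ∈ S, x * algebraMap B (FractionRing B) s
      = algebraMap B (FractionRing B) f := by
  set φ := algebraMap B (FractionRing B) with hφ
  have hs0 : ∀ s ∈ S, φ s ≠ 0 := fun s hs => phi_ne_zero (fun h => hS0 (h ▸ hs))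
  constructor
  · intro hx
    let T : Subring (FractionRing B) :=
      { carrier := {x | ∃ f : B, ∃ s ∈ S, x * φ s = φ f}
        one_mem' := ⟨1, 1, S.one_mem, by simp⟩
        zero_mem' := ⟨0, 1, S.one_mem, by simp⟩
        add_mem' := by
          rintro x y ⟨f, s, hs, hx⟩ ⟨g, t, ht, hy⟩
          refine ⟨f * t + g * s, s * t, S.mul_mem hs ht, ?_⟩
          rw [map_mul, map_add, map_mul, map_mul]
          calc (x + y) * (φ s * φ t) = (x * φ s) * φ t + (y * φ t) * φ s := by ring
          _ = φ f * φ t + φ g * φ s := by rw [hx, hy]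
        neg_mem' := by
          rintro x ⟨f, s, hs, hx⟩
          exact ⟨-f, s, hs, by rw [map_neg, ← hx]; ring⟩
        mul_mem' := by
          rintro x y ⟨f, s, hs, hx⟩ ⟨g, t, ht, hy⟩
          refine ⟨f * g, s * t, S.mul_mem hs ht, ?_⟩
          rw [map_mul, map_mul]
          calc x * y * (φ s * φ t) = (x * φ s) * (y * φ t) := by ring
          _ = φ f * φ g := by rw [hx, hy] }
    have hle : locB B S ≤ T := by
      rw [locB, Subring.closure_le]
      rintro z (⟨f, rfl⟩ | ⟨s, hs, hz⟩)
      · exact ⟨f, 1, S.one_mem, by simp [hφ]⟩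
      · exact ⟨1, s, hs, by rw [hz, map_one]⟩
    exact hle hx
  · rintro ⟨f, s, hs, hxe⟩
    have h1 : φ f ∈ locB B S := Subring.subset_closure (Or.inl ⟨f, rfl⟩)
    have h2 : (φ s)⁻¹ ∈ locB B S :=
      Subring.subset_closure (Or.inr ⟨s, hs, inv_mul_cancel₀ (hs0 s hs)⟩)
    have hx : x = φ f * (φ s)⁻¹ := (eq_mul_inv_iff_mul_eq₀ (hs0 s hs)).mpr hxe
    exact hx ▸ mul_mem h1 h2

lemma mem_locA_iff {B : Type} [CommRing B] [IsDomain B] (A : Subring B) (S : Submonoid B)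
    (hSA : (S : Set B) ⊆ A) (hS0 : (0 : B) ∉ S) (x : FractionRing B) :
    x ∈ locA B A S ↔ ∃ a ∈ A, ∃ s ∈ S, x * algebraMap B (FractionRing B) s
      = algebraMap B (FractionRing B) a := by
  set φ := algebraMap B (FractionRing B) with hφ
  have hs0 : ∀ s ∈ S, φ s ≠ 0 := fun s hs => phi_ne_zero (fun h => hS0 (h ▸ hs))
  constructor
  · intro hx
    let T : Subring (FractionRing B) :=
      { carrier := {x | ∃ a ∈ A, ∃ s ∈ S, x * φ s = φ a}
        one_mem' := ⟨1, A.one_mem, 1, S.one_mem, by simp⟩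
        zero_mem' := ⟨0, A.zero_mem, 1, S.one_mem, by simp⟩
        add_mem' := by
          rintro x y ⟨f, hf, s, hs, hx⟩ ⟨g, hg, t, ht, hy⟩
          refine ⟨f * t + g * s, A.add_mem (A.mul_mem hf (hSA ht)) (A.mul_mem hg (hSA hs)),
            s * t, S.mul_mem hs ht, ?_⟩
          rw [map_mul, map_add, map_mul, map_mul]
          calc (x + y) * (φ s * φ t) = (x * φ s) * φ t + (y * φ t) * φ s := by ring
          _ = φ f * φ t + φ g * φ s := by rw [hx, hy]
        neg_mem' := by
          rintro x ⟨f, hf, s, hs, hx⟩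
          exact ⟨-f, A.neg_mem hf, s, hs, by rw [map_neg, ← hx]; ring⟩
        mul_mem' := by
          rintro x y ⟨f, hf, s, hs, hx⟩ ⟨g, hg, t, ht, hy⟩
          refine ⟨f * g, A.mul_mem hf hg, s * t, S.mul_mem hs ht, ?_⟩
          rw [map_mul, map_mul]
          calc x * y * (φ s * φ t) = (x * φ s) * (y * φ t) := by ring
          _ = φ f * φ g := by rw [hx, hy] }
    have hle : locA B A S ≤ T := by
      rw [locA, Subring.closure_le]
      rintro z (⟨a, ha, rfl⟩ | ⟨s, hs, hz⟩)
      · exact ⟨a, ha, 1, S.one_mem, by simp [hφ]⟩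
      · exact ⟨1, A.one_mem, s, hs, by rw [hz, map_one]⟩
    exact hle hx
  · rintro ⟨a, ha, s, hs, hxe⟩
    have h1 : φ a ∈ locA B A S := Subring.subset_closure (Or.inl ⟨a, ha, rfl⟩)
    have h2 : (φ s)⁻¹ ∈ locA B A S :=
      Subring.subset_closure (Or.inr ⟨s, hs, inv_mul_cancel₀ (hs0 s hs)⟩)
    have hx : x = φ a * (φ s)⁻¹ := (eq_mul_inv_iff_mul_eq₀ (hs0 s hs)).mpr hxe
    exact hx ▸ mul_mem h1 h2

theorem polarGroup_localization (B : Type) [CommRing B] [IsDomain B] [Algebra ℂ B]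
    [Algebra ℝ B] [IsScalarTower ℝ ℂ B] (A : Subring B)
    (hRmem : ∀ r : ℝ, algebraMap ℝ B r ∈ A)
    (hNoeth : IsNoetherianRing ↥A)
    (halgclosed : ∀ a ∈ A, IsAlgebraic ℝ a → ∃ r : ℝ, a = algebraMap ℝ B r)
    (hdecomp : ∀ b : B, ∃! p : ↥A × ↥A,
      b = (p.1 : B) + algebraMap ℂ B Complex.I * (p.2 : B))
    (S : Submonoid B) (hSA : (S : Set B) ⊆ A) (hS0 : (0 : B) ∉ S) :
    (∀ x ∈ locB B S, ∃! p : FractionRing B × FractionRing B,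
      (p.1 ∈ locA B A S ∧ p.2 ∈ locA B A S) ∧
      x = p.1 + algebraMap B (FractionRing B) (algebraMap ℂ B Complex.I) * p.2) ∧
    ∃ π : ((FractionRing B)ˣ ⧸ polarN B A) →* ((FractionRing B)ˣ ⧸ polarNLoc B A S),
      (∀ (f : B) (hf : f ≠ 0), π (polarCls B A f hf) = polarClsLoc B A S f hf) ∧
      Function.Surjective π ∧
      π.ker = Subgroup.closure
        {x | ∃ (f : B) (hf : f ≠ 0), (∃ s ∈ S, f ∣ s) ∧ x = polarCls B A f hf} := by
  set φ := algebraMap B (FractionRing B) with hφdef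
  set iB := algebraMap ℂ B Complex.I with hiBdef
  have hSne : ∀ s ∈ S, (s : B) ≠ 0 := fun s hs h => hS0 (h ▸ hs)
  have hs0 : ∀ s ∈ S, φ s ≠ 0 := fun s hs => phi_ne_zero (hSne s hs)
  have hinj : Function.Injective φ := IsFractionRing.injective B (FractionRing B)
  -- key vanishing lemma
  have key : ∀ y z : FractionRing B, y ∈ locA B A S → z ∈ locA B A S →
      y + φ iB * z = 0 → y = 0 ∧ z = 0 := by
    intro y z hy hz h0
    obtain ⟨a, haA, s, hs, hya⟩ := (mem_locA_iff A S hSA hS0 y).mp hy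
    obtain ⟨b, hbA, t, ht, hzb⟩ := (mem_locA_iff A S hSA hS0 z).mp hz
    have hB : a * t + iB * (b * s) = 0 := by
      apply hinj
      rw [map_add, map_mul, map_mul, map_mul, map_zero, ← hya, ← hzb]
      linear_combination φ s * φ t * h0
    obtain ⟨p0, -, hp0u⟩ := hdecomp 0
    have e1 := hp0u (⟨a * t, A.mul_mem haA (hSA ht)⟩, ⟨b * s, A.mul_mem hbA (hSA hs)⟩)
      (by simpa using hB.symm)
    have e2 := hp0u (0, 0) (by simp)
    have e3 := e1.trans e2.symm
    have at0 : a * t = 0 := congrArg (fun p : ↥A × ↥A => (p.1 : B)) e3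
    have bs0 : b * s = 0 := congrArg (fun p : ↥A × ↥A => (p.2 : B)) e3
    have ha0 : a = 0 := (mul_eq_zero.mp at0).resolve_right (hSne t ht)
    have hb0 : b = 0 := (mul_eq_zero.mp bs0).resolve_right (hSne s hs)
    constructor
    · rw [ha0, map_zero] at hya
      exact (mul_eq_zero.mp hya).resolve_right (hs0 s hs)
    · rw [hb0, map_zero] at hzb
      exact (mul_eq_zero.mp hzb).resolve_right (hs0 t ht)
  constructor
  · -- Part 1: decomposition
    intro x hx
    obtain ⟨f, s, hs, hfs⟩ := (mem_locB_iff S hS0 x).mp hx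
    obtain ⟨⟨a, b⟩, hab, -⟩ := hdecomp f
    refine ⟨(φ a * (φ s)⁻¹, φ b * (φ s)⁻¹), ⟨⟨?_, ?_⟩, ?_⟩, ?_⟩
    · exact (mem_locA_iff A S hSA hS0 _).mpr
        ⟨a, a.2, s, hs, by rw [inv_mul_cancel_right₀ (hs0 s hs)]⟩
    · exact (mem_locA_iff A S hSA hS0 _).mpr
        ⟨b, b.2, s, hs, by rw [inv_mul_cancel_right₀ (hs0 s hs)]⟩
    · have hx' : x = (φ a + φ iB * φ b) * (φ s)⁻¹ := by
        rw [eq_mul_inv_iff_mul_eq₀ (hs0 s hs), hfs, hab, map_add, map_mul]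
      rw [hx']; ring
    · rintro ⟨q1, q2⟩ ⟨⟨hq1, hq2⟩, hqeq⟩
      have hp1 : (φ a * (φ s)⁻¹ : FractionRing B) ∈ locA B A S :=
        (mem_locA_iff A S hSA hS0 _).mpr
          ⟨a, a.2, s, hs, by rw [inv_mul_cancel_right₀ (hs0 s hs)]⟩
      have hp2 : (φ b * (φ s)⁻¹ : FractionRing B) ∈ locA B A S :=
        (mem_locA_iff A S hSA hS0 _).mpr
          ⟨b, b.2, s, hs, by rw [inv_mul_cancel_right₀ (hs0 s hs)]⟩
      have hpeq : x = φ a * (φ s)⁻¹ + φ iB * (φ b * (φ s)⁻¹) := by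
        have hx' : x = (φ a + φ iB * φ b) * (φ s)⁻¹ := by
          rw [eq_mul_inv_iff_mul_eq₀ (hs0 s hs), hfs, hab, map_add, map_mul]
        rw [hx']; ring
      have h0 : (q1 - φ a * (φ s)⁻¹) + φ iB * (q2 - φ b * (φ s)⁻¹) = 0 := by
        linear_combination hpeq - hqeq
      obtain ⟨hy0, hz0⟩ := key _ _ (Subring.sub_mem _ hq1 hp1) (Subring.sub_mem _ hq2 hp2) h0
      have : q1 = φ a * (φ s)⁻¹ := sub_eq_zero.mp hy0
      have : q2 = φ b * (φ s)⁻¹ := sub_eq_zero.mp hz0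
      exact Prod.ext (sub_eq_zero.mp hy0) (sub_eq_zero.mp hz0)
  · -- Part 2: the map π
    have hle : polarN B A ≤ polarNLoc B A S := by
      rw [polarN]
      rw [Subgroup.closure_le]
      rintro u (⟨bu, hbu⟩ | ⟨a, ha⟩)
      · refine Subgroup.subset_closure (Or.inl ⟨?_, ?_⟩)
        · exact hbu ▸ Subring.subset_closure (Or.inl ⟨bu, rfl⟩)
        · have : ((u⁻¹ : (FractionRing B)ˣ) : FractionRing B) = φ ((bu⁻¹ : Bˣ) : B) := by
            have h1 : (u : FractionRing B) * φ ((bu⁻¹ : Bˣ) : B) = 1 := by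
              rw [hbu, ← map_mul]
              simp
            rw [Units.val_inv_eq_inv_val]
            exact inv_eq_of_mul_eq_one_right h1
          exact this ▸ Subring.subset_closure (Or.inl ⟨_, rfl⟩)
      · exact Subgroup.subset_closure (Or.inr
          (ha ▸ Subring.subset_closure (Or.inl ⟨(a : B), a.2, rfl⟩)))
    refine ⟨QuotientGroup.map (polarN B A) (polarNLoc B A S) (MonoidHom.id _)
      (fun u hu => hle hu), ?_, ?_, ?_⟩
    · intro f hf
      rfl
    · intro y
      obtain ⟨u, rfl⟩ := QuotientGroup.mk_surjective y
      exact ⟨QuotientGroup.mk u, rfl⟩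
    · refine le_antisymm ?_ ?_
      · intro x hx
        rw [MonoidHom.mem_ker] at hx
        obtain ⟨u, rfl⟩ := QuotientGroup.mk_surjective x
        have hu : u ∈ polarNLoc B A S := by
          rwa [show (QuotientGroup.map (polarN B A) (polarNLoc B A S) (MonoidHom.id _)
              (fun u hu => hle hu)) (QuotientGroup.mk u) = QuotientGroup.mk u from rfl,
            QuotientGroup.eq_one_iff] at hx
        clear hx
        refine Subgroup.closure_induction ?_ (by rw [QuotientGroup.mk_one]; exact one_mem _)
          (fun a b _ _ pa pb => by
            rw [show (QuotientGroup.mk (a * b) : _ ⧸ polarN B A)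
              = QuotientGroup.mk a * QuotientGroup.mk b from rfl]
            exact mul_mem pa pb)
          (fun a _ pa => by
            rw [show (QuotientGroup.mk a⁻¹ : _ ⧸ polarN B A)
              = (QuotientGroup.mk a)⁻¹ from rfl]
            exact inv_mem pa) hu
        rintro u (⟨hu1, hu2⟩ | hu3)
        · obtain ⟨f, s, hs, hf⟩ := (mem_locB_iff S hS0 _).mp hu1
          obtain ⟨g, t, ht, hg⟩ := (mem_locB_iff S hS0 _).mp hu2
          have hf0 : f ≠ 0 := by
            intro h
            rw [h, map_zero] at hf
            exact (mul_ne_zero (Units.ne_zero u) (hs0 s hs)) hf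
          have hfg : f * g = s * t := by
            apply hinj
            rw [map_mul, map_mul, ← hf, ← hg]
            have huu : (u : FractionRing B) *
                ((u⁻¹ : (FractionRing B)ˣ) : FractionRing B) = 1 := u.mul_inv
            linear_combination (φ s * φ t) * huu
          have hueq : u = Units.mk0 (φ f) (phi_ne_zero hf0) *
              (Units.mk0 (φ s) (hs0 s hs))⁻¹ := by
            apply Units.ext
            rw [Units.val_mul, Units.val_inv_eq_inv_val, Units.val_mk0, Units.val_mk0]
            exact (eq_mul_inv_iff_mul_eq₀ (hs0 s hs)).mpr hf
          have h1 : (QuotientGroup.mk (Units.mk0 (φ f) (phi_ne_zero hf0)) :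
              _ ⧸ polarN B A) ∈ Subgroup.closure
              {x | ∃ (f : B) (hf : f ≠ 0), (∃ s ∈ S, f ∣ s) ∧ x = polarCls B A f hf} :=
            Subgroup.subset_closure ⟨f, hf0, ⟨s * t, S.mul_mem hs ht, ⟨g, hfg.symm⟩⟩, rfl⟩
          have h2 : (QuotientGroup.mk (Units.mk0 (φ s) (hs0 s hs)) :
              _ ⧸ polarN B A) = 1 :=
            (QuotientGroup.eq_one_iff _).mpr
              (Subgroup.subset_closure (Or.inr ⟨⟨s, hSA hs⟩, rfl⟩))
          rw [hueq, show (QuotientGroup.mk (Units.mk0 (φ f) (phi_ne_zero hf0) *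
              (Units.mk0 (φ s) (hs0 s hs))⁻¹) : _ ⧸ polarN B A)
              = QuotientGroup.mk (Units.mk0 (φ f) (phi_ne_zero hf0)) *
                (QuotientGroup.mk (Units.mk0 (φ s) (hs0 s hs)))⁻¹ from rfl,
            h2, inv_one]
          exact mul_mem h1 (one_mem _)
        · obtain ⟨a, haA, s, hs, hua⟩ := (mem_locA_iff A S hSA hS0 _).mp hu3
          have ha0 : a ≠ 0 := by
            intro h
            rw [h, map_zero] at hua
            exact (mul_ne_zero (Units.ne_zero u) (hs0 s hs)) hua
          have hueq : u = Units.mk0 (φ a) (phi_ne_zero ha0) *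
              (Units.mk0 (φ s) (hs0 s hs))⁻¹ := by
            apply Units.ext
            rw [Units.val_mul, Units.val_inv_eq_inv_val, Units.val_mk0, Units.val_mk0]
            exact (eq_mul_inv_iff_mul_eq₀ (hs0 s hs)).mpr hua
          have h1 : (QuotientGroup.mk (Units.mk0 (φ a) (phi_ne_zero ha0)) :
              _ ⧸ polarN B A) = 1 :=
            (QuotientGroup.eq_one_iff _).mpr
              (Subgroup.subset_closure (Or.inr ⟨⟨a, haA⟩, rfl⟩))
          have h2 : (QuotientGroup.mk (Units.mk0 (φ s) (hs0 s hs)) :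
              _ ⧸ polarN B A) = 1 :=
            (QuotientGroup.eq_one_iff _).mpr
              (Subgroup.subset_closure (Or.inr ⟨⟨s, hSA hs⟩, rfl⟩))
          rw [hueq, show (QuotientGroup.mk (Units.mk0 (φ a) (phi_ne_zero ha0) *
              (Units.mk0 (φ s) (hs0 s hs))⁻¹) : _ ⧸ polarN B A)
              = QuotientGroup.mk (Units.mk0 (φ a) (phi_ne_zero ha0)) *
                (QuotientGroup.mk (Units.mk0 (φ s) (hs0 s hs)))⁻¹ from rfl,
            h1, h2, inv_one]
          exact mul_mem (one_mem _) (one_mem _)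
      · rw [Subgroup.closure_le]
        rintro x ⟨f, hf, ⟨s, hs, g, hgs⟩, rfl⟩
        rw [SetLike.mem_coe, MonoidHom.mem_ker]
        show polarClsLoc B A S f hf = 1
        rw [polarClsLoc, QuotientGroup.eq_one_iff]
        refine Subgroup.subset_closure
          (Or.inl ⟨Subring.subset_closure (Or.inl ⟨f, rfl⟩), ?_⟩)
        rw [Units.val_inv_eq_inv_val, Units.val_mk0]
        refine (mem_locB_iff S hS0 _).mpr ⟨g, s, hs, ?_⟩
        rw [hgs, map_mul, inv_mul_cancel_left₀ (phi_ne_zero hf)]
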